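/- Let r ≥ 1 and β > 0 with rβ > 3/2, A ∈ ℝ^{m×n}, z ∈ ℝ^m and ϑ ∈ (0,∞)^n. Then the objective function F(u,θ) is convex on the convex set ℝ^n × (0,∞)^n = {(u,θ) : θ_j > 0 for all j}. -/
import Mathlib

open Real

section aux

variable {E : Type*} {ι : Type*} [AddCommMonoid E] [SMul ℝ E] {s : Set E}

lemma myConvexOn_sum (hs : Convex ℝ s) (t : Finset ι) (f : ι → E → ℝ)
    (h : ∀ i ∈ t, ConvexOn ℝ s (f i)) :
    ConvexOn ℝ s (fun x => ∑ i ∈ t, f i x) := by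
  classical
  induction t using Finset.induction_on with
  | empty => simpa using convexOn_const (0 : ℝ) hs
  | @insert a t ha ih =>
      simp only [Finset.sum_insert ha]
      exact (h a (Finset.mem_insert_self a t)).add
        (ih fun i hi => h i (Finset.mem_insert_of_mem hi))

lemma myConcaveOn_sum (hs : Convex ℝ s) (t : Finset ι) (f : ι → E → ℝ)
    (h : ∀ i ∈ t, ConcaveOn ℝ s (f i)) :
    ConcaveOn ℝ s (fun x => ∑ i ∈ t, f i x) := by
  classical
  induction t using Finset.induction_on with
  | empty => simpa using concaveOn_const (0 : ℝ) hs
  | @insert a t ha ih =>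
      simp only [Finset.sum_insert ha]
      exact (h a (Finset.mem_insert_self a t)).add
        (ih fun i hi => h i (Finset.mem_insert_of_mem hi))

end aux

lemma pos_combo {a b s t : ℝ} (ha : 0 ≤ a) (hb : 0 ≤ b) (hab : a + b = 1)
    (hs : 0 < s) (ht : 0 < t) : 0 < a * s + b * t := by
  rcases eq_or_lt_of_le ha with h | h
  · have hb1 : b = 1 := by linarith
    simp [← h, hb1, ht]
  · exact add_pos_of_pos_of_nonneg (mul_pos h hs) (mul_nonneg hb ht.le)

/-- For `r ≥ 1`, `β > 0` with `r * β > 3/2`, the IAS objective `F(u, θ)` is convex on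
the convex set `ℝⁿ × (0, ∞)ⁿ`. -/
theorem ias_objective_convexOn {n m : ℕ} (r β : ℝ) (hr : 1 ≤ r) (hβ : 0 < β)
    (hrβ : 3 / 2 < r * β) (A : Matrix (Fin m) (Fin n) ℝ) (z : Fin m → ℝ)
    (ϑ : Fin n → ℝ) (hϑ : ∀ j, 0 < ϑ j) :
    ConvexOn ℝ {p : (Fin n → ℝ) × (Fin n → ℝ) | ∀ j, 0 < p.2 j}
      (fun p : (Fin n → ℝ) × (Fin n → ℝ) =>
        (1 / 2) * ∑ i, (A.mulVec p.1 i - z i) ^ 2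
          + (1 / 2) * ∑ j, (p.1 j) ^ 2 / p.2 j
          - (r * β - 3 / 2) * ∑ j, Real.log (p.2 j / ϑ j)
          + ∑ j, (p.2 j / ϑ j) ^ r) := by
  set S : Set ((Fin n → ℝ) × (Fin n → ℝ)) := {p | ∀ j, 0 < p.2 j} with hSdef
  have hS : Convex ℝ S := by
    intro x hx y hy a b ha hb hab
    intro j
    simp only [Prod.snd_add, Prod.smul_snd, Pi.add_apply, Pi.smul_apply, smul_eq_mul]
    exact pos_combo ha hb hab (hx j) (hy j)
  -- the data-misfit term
  have h1 : ∀ i, ConvexOn ℝ S (fun p : (Fin n → ℝ) × (Fin n → ℝ) =>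
      (A.mulVec p.1 i - z i) ^ 2) := by
    intro i
    refine ⟨hS, ?_⟩
    intro x hx y hy a b ha hb hab
    simp only [Prod.fst_add, Prod.smul_fst, Matrix.mulVec_add, Matrix.mulVec_smul,
      Pi.add_apply, Pi.smul_apply, smul_eq_mul]
    have hb' : b = 1 - a := by linarith
    subst hb'
    nlinarith [mul_nonneg (mul_nonneg ha hb)
      (sq_nonneg (A.mulVec x.1 i - A.mulVec y.1 i))]
  -- the quadratic-over-linear term
  have h2 : ∀ j, ConvexOn ℝ S (fun p : (Fin n → ℝ) × (Fin n → ℝ) =>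
      (p.1 j) ^ 2 / p.2 j) := by
    intro j
    refine ⟨hS, ?_⟩
    intro x hx y hy a b ha hb hab
    simp only [Prod.fst_add, Prod.snd_add, Prod.smul_fst, Prod.smul_snd,
      Pi.add_apply, Pi.smul_apply, smul_eq_mul]
    have hs : 0 < x.2 j := hx j
    have ht : 0 < y.2 j := hy j
    have hc : 0 < a * x.2 j + b * y.2 j := pos_combo ha hb hab hs ht
    rw [div_le_iff₀ hc]
    have key : a * ((x.1 j) ^ 2 / x.2 j) + b * ((y.1 j) ^ 2 / y.2 j)
        = (a * (x.1 j) ^ 2 * y.2 j + b * (y.1 j) ^ 2 * x.2 j) / (x.2 j * y.2 j) := by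
      field_simp
    rw [key, div_mul_eq_mul_div, le_div_iff₀ (mul_pos hs ht)]
    nlinarith [mul_nonneg (mul_nonneg ha hb) (sq_nonneg (x.1 j * y.2 j - y.1 j * x.2 j))]
  -- the log term (concave)
  have h3 : ∀ j, ConcaveOn ℝ S (fun p : (Fin n → ℝ) × (Fin n → ℝ) =>
      Real.log (p.2 j / ϑ j)) := by
    intro j
    refine ⟨hS, ?_⟩
    intro x hx y hy a b ha hb hab
    simp only [Prod.snd_add, Prod.smul_snd, Pi.add_apply, Pi.smul_apply, smul_eq_mul]
    have hx' : x.2 j / ϑ j ∈ Set.Ioi (0 : ℝ) := div_pos (hx j) (hϑ j)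
    have hy' : y.2 j / ϑ j ∈ Set.Ioi (0 : ℝ) := div_pos (hy j) (hϑ j)
    have := (strictConcaveOn_log_Ioi.concaveOn).2 hx' hy' ha hb hab
    have heq : (a * x.2 j + b * y.2 j) / ϑ j
        = a • (x.2 j / ϑ j) + b • (y.2 j / ϑ j) := by
      simp only [smul_eq_mul]; field_simp
    rw [heq]
    simpa using this
  -- the rpow term
  have h4 : ∀ j, ConvexOn ℝ S (fun p : (Fin n → ℝ) × (Fin n → ℝ) =>
      (p.2 j / ϑ j) ^ r) := by
    intro j
    refine ⟨hS, ?_⟩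
    intro x hx y hy a b ha hb hab
    simp only [Prod.snd_add, Prod.smul_snd, Pi.add_apply, Pi.smul_apply, smul_eq_mul]
    have hx' : x.2 j / ϑ j ∈ Set.Ici (0 : ℝ) := (div_pos (hx j) (hϑ j)).le
    have hy' : y.2 j / ϑ j ∈ Set.Ici (0 : ℝ) := (div_pos (hy j) (hϑ j)).le
    have := (convexOn_rpow hr).2 hx' hy' ha hb hab
    have heq : (a * x.2 j + b * y.2 j) / ϑ j
        = a • (x.2 j / ϑ j) + b • (y.2 j / ϑ j) := by
      simp only [smul_eq_mul]; field_simp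
    rw [heq]
    simpa using this
  have H1 : ConvexOn ℝ S (fun p : (Fin n → ℝ) × (Fin n → ℝ) =>
      (1 / 2) * ∑ i, (A.mulVec p.1 i - z i) ^ 2) :=
    (myConvexOn_sum hS Finset.univ _ (fun i _ => h1 i)).smul (by norm_num)
  have H2 : ConvexOn ℝ S (fun p : (Fin n → ℝ) × (Fin n → ℝ) =>
      (1 / 2) * ∑ j, (p.1 j) ^ 2 / p.2 j) :=
    (myConvexOn_sum hS Finset.univ _ (fun j _ => h2 j)).smul (by norm_num)
  have H3 : ConcaveOn ℝ S (fun p : (Fin n → ℝ) × (Fin n → ℝ) =>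
      (r * β - 3 / 2) * ∑ j, Real.log (p.2 j / ϑ j)) :=
    (myConcaveOn_sum hS Finset.univ _ (fun j _ => h3 j)).smul (by linarith)
  have H4 : ConvexOn ℝ S (fun p : (Fin n → ℝ) × (Fin n → ℝ) =>
      ∑ j, (p.2 j / ϑ j) ^ r) :=
    myConvexOn_sum hS Finset.univ _ (fun j _ => h4 j)
  exact ((H1.add H2).sub H3).add H4
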